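/- For any Hermitian N×N matrix W, E ∈ ℝ and η > 0, the absolute value of the resolvent admits the integral representation |G(E + iη)| = (2/π) ∫_0^∞ Im G(E + i√(η² + v²)) / √(η² + v²) dv, where G(ζ) = (W - ζ)^{-1}, |G| = (GG*)^{1/2}, and Im G = (G - G*)/(2i). -/

import Mathlib

open Matrix MeasureTheory Asymptotics
open scoped ComplexOrder BigOperators

/-- Normalized trace `⟨M⟩ = N⁻¹ Tr M`. -/
noncomputable def ntr {N : ℕ} (M : Matrix (Fin N) (Fin N) ℂ) : ℂ :=
  (N : ℂ)⁻¹ * M.trace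

/-- `|A| = (A Aᴴ)^{1/2}`. -/
noncomputable def matAbs {N : ℕ} (A : Matrix (Fin N) (Fin N) ℂ) : Matrix (Fin N) (Fin N) ℂ :=
  ((Matrix.posSemidef_self_mul_conjTranspose A).1.eigenvectorUnitary : Matrix (Fin N) (Fin N) ℂ) *
    diagonal ((RCLike.ofReal : ℝ → ℂ) ∘ Real.sqrt ∘ (Matrix.posSemidef_self_mul_conjTranspose A).1.eigenvalues) *
    (star (Matrix.posSemidef_self_mul_conjTranspose A).1.eigenvectorUnitary : Matrix (Fin N) (Fin N) ℂ)

/-- Euclidean operator norm of a matrix. -/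
noncomputable def opNorm {N : ℕ} (A : Matrix (Fin N) (Fin N) ℂ) : ℝ :=
  ‖Matrix.toEuclideanCLM (𝕜 := ℂ) A‖

/-- Normalized `p`-th Schatten norm `⟨|A|^p⟩^{1/p}`. -/
noncomputable def schatten {N : ℕ} (p : ℕ) (A : Matrix (Fin N) (Fin N) ℂ) : ℝ :=
  (ntr (matAbs A ^ p)).re ^ ((p : ℝ)⁻¹)

/-- The `ℓ`-weighted `(2,p)`-Schatten norm, `p ∈ [2,∞]` (`p = ⊤` uses the operator norm). -/
noncomputable def wnorm {N : ℕ} (p : ℕ∞) (ℓ : ℝ) (A : Matrix (Fin N) (Fin N) ℂ) : ℝ :=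
  p.recTopCoe (schatten 2 A / ℓ ^ ((2:ℝ)⁻¹) + opNorm A)
    (fun q => schatten 2 A / ℓ ^ ((2:ℝ)⁻¹) + schatten q A / ℓ ^ ((q : ℝ)⁻¹))

/-- Resolvent `G(ζ) = (W - ζ)⁻¹`. -/
noncomputable def resOf {N : ℕ} (W : Matrix (Fin N) (Fin N) ℂ) (ζ : ℂ) :
    Matrix (Fin N) (Fin N) ℂ :=
  (W - ζ • (1 : Matrix (Fin N) (Fin N) ℂ))⁻¹

/-- `Im G = (G - Gᴴ)/(2i)`. -/
noncomputable def imPart {N : ℕ} (G : Matrix (Fin N) (Fin N) ℂ) : Matrix (Fin N) (Fin N) ℂ :=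
  (2 * Complex.I)⁻¹ • (G - Gᴴ)

/-- Bessel function of the first kind of order one (integral representation). -/
noncomputable def besselJ1 (x : ℝ) : ℝ :=
  (1 / Real.pi) * ∫ θ in (0:ℝ)..Real.pi, Real.cos (θ - x * Real.sin θ)

/-- Semicircle density on `[-2,2]`. -/
noncomputable def rhoSC (x : ℝ) : ℝ := (1 / (2 * Real.pi)) * Real.sqrt (4 - x ^ 2)

/-- Stieltjes transform of the semicircle law. -/
noncomputable def mSC (z : ℂ) : ℂ := ∫ x in (-2:ℝ)..2, (rhoSC x : ℂ) / (x - z)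

/-- `φ(t) = J₁(2t)/t`, with `φ(0) = 1`. -/
noncomputable def phiSC (t : ℝ) : ℝ := if t = 0 then 1 else besselJ1 (2 * t) / t


lemma myIntegrable (c : ℝ) (hc : 0 < c) :
    IntegrableOn (fun v : ℝ => (c ^ 2 + v ^ 2)⁻¹) (Set.Ioi 0) := by
  have h := integrableOn_Ioi_comp_mul_left_iff (fun v : ℝ => (c ^ 2 + v ^ 2)⁻¹) 0 hc
  rw [mul_zero] at h
  refine h.mp ?_
  have heq : (fun x : ℝ => (c ^ 2 + (c * x) ^ 2)⁻¹)
      = fun x : ℝ => (c ^ 2)⁻¹ * (1 + x ^ 2)⁻¹ := by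
    funext x
    rw [← mul_inv]
    congr 1
    ring
  rw [heq]
  exact (integrable_inv_one_add_sq.integrableOn).const_mul _

lemma myIntegral (c : ℝ) (hc : 0 < c) :
    ∫ v in Set.Ioi (0:ℝ), (c ^ 2 + v ^ 2)⁻¹ = Real.pi / (2 * c) := by
  have h := integral_comp_mul_left_Ioi (fun v : ℝ => (c ^ 2 + v ^ 2)⁻¹) 0 hc
  rw [mul_zero] at h
  have heq : (fun x : ℝ => (c ^ 2 + (c * x) ^ 2)⁻¹)
      = fun x : ℝ => (c ^ 2)⁻¹ * (1 + x ^ 2)⁻¹ := by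
    funext x
    rw [← mul_inv]; congr 1; ring
  rw [heq] at h
  rw [integral_const_mul, integral_Ioi_inv_one_add_sq, Real.arctan_zero, sub_zero,
    smul_eq_mul] at h
  have hc' : c ≠ 0 := hc.ne'
  field_simp at h ⊢
  nlinarith [h]

lemma conjU_apply {N : ℕ} (U : Matrix (Fin N) (Fin N) ℂ) (d : Fin N → ℂ) (a b : Fin N) :
    (U * Matrix.diagonal d * star U) a b
      = ∑ i, U a i * d i * (starRingEnd ℂ) (U b i) := by
  rw [Matrix.mul_apply]
  congr 1; funext i
  rw [Matrix.mul_diagonal]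
  simp [Matrix.star_apply, mul_comm]

lemma UDU_mul {N : ℕ} (U : Matrix (Fin N) (Fin N) ℂ) (hU : U ∈ Matrix.unitaryGroup (Fin N) ℂ)
    (d e : Fin N → ℂ) :
    (U * Matrix.diagonal d * star U) * (U * Matrix.diagonal e * star U)
      = U * Matrix.diagonal (d * e) * star U := by
  have h1 : star U * U = 1 := Matrix.UnitaryGroup.star_mul_self ⟨U, hU⟩
  calc (U * Matrix.diagonal d * star U) * (U * Matrix.diagonal e * star U)
      = U * (Matrix.diagonal d * (star U * U) * Matrix.diagonal e) * star U := by
        simp only [Matrix.mul_assoc]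
    _ = U * Matrix.diagonal (d * e) * star U := by
        rw [h1, Matrix.mul_one, Matrix.diagonal_mul_diagonal]; rfl

lemma UDU_conjTranspose {N : ℕ} (U : Matrix (Fin N) (Fin N) ℂ) (d : Fin N → ℂ) :
    (U * Matrix.diagonal d * star U)ᴴ = U * Matrix.diagonal (star d) * star U := by
  rw [Matrix.conjTranspose_mul, Matrix.conjTranspose_mul, Matrix.diagonal_conjTranspose]
  simp [Matrix.star_eq_conjTranspose, Matrix.mul_assoc]

lemma res_diag {N : ℕ} {W : Matrix (Fin N) (Fin N) ℂ} (hW : W.IsHermitian)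
    (ζ : ℂ) (hζ : ∀ i, ((hW.eigenvalues i : ℂ) - ζ) ≠ 0) :
    resOf W ζ = (hW.eigenvectorUnitary : Matrix (Fin N) (Fin N) ℂ)
      * Matrix.diagonal (fun i => ((hW.eigenvalues i : ℂ) - ζ)⁻¹)
      * star (hW.eigenvectorUnitary : Matrix (Fin N) (Fin N) ℂ) := by
  set U : Matrix (Fin N) (Fin N) ℂ := (hW.eigenvectorUnitary : Matrix (Fin N) (Fin N) ℂ) with hUdef
  have hU : U ∈ Matrix.unitaryGroup (Fin N) ℂ := hW.eigenvectorUnitary.2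
  have h2 : U * star U = 1 := Matrix.mem_unitaryGroup_iff.mp hU
  have hWd : W - ζ • (1 : Matrix (Fin N) (Fin N) ℂ)
      = U * Matrix.diagonal (fun i => (hW.eigenvalues i : ℂ) - ζ) * star U := by
    have h1 := hW.spectral_theorem
    simp only [Unitary.conjStarAlgAut_apply, Unitary.coe_star, ← hUdef] at h1
    calc W - ζ • (1 : Matrix (Fin N) (Fin N) ℂ)
        = U * Matrix.diagonal (RCLike.ofReal ∘ hW.eigenvalues) * star U
          - ζ • (U * 1 * star U) := by rw [← h1, Matrix.mul_one, h2]
      _ = U * (Matrix.diagonal (RCLike.ofReal ∘ hW.eigenvalues) - ζ • 1) * star U := by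
          rw [Matrix.mul_sub, Matrix.sub_mul, Matrix.mul_smul, Matrix.smul_mul]
      _ = _ := by
          congr 1
          congr 1
          rw [← Matrix.diagonal_one, ← Matrix.diagonal_smul, Matrix.diagonal_sub]
          congr 1
          funext i
          simp [RCLike.ofReal_alg]
  rw [resOf, hWd]
  apply Matrix.inv_eq_right_inv
  rw [UDU_mul U hU]
  have : (fun i => (hW.eigenvalues i : ℂ) - ζ) * (fun i => ((hW.eigenvalues i : ℂ) - ζ)⁻¹)
      = fun _ => 1 := by
    funext i; exact mul_inv_cancel₀ (hζ i)
  rw [this, Matrix.diagonal_one, Matrix.mul_one, h2]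

open scoped MatrixOrder

lemma matAbs_diag' {N : ℕ} (U : Matrix (Fin N) (Fin N) ℂ) (hU : U ∈ Matrix.unitaryGroup (Fin N) ℂ)
    (d : Fin N → ℂ) (A : Matrix (Fin N) (Fin N) ℂ) (hA : A = U * Matrix.diagonal d * star U) :
    matAbs A
      = U * Matrix.diagonal (fun i => (‖d i‖ : ℂ)) * star U := by
  have hstar : star U = Uᴴ := rfl
  have hS : Matrix.PosSemidef (U * Matrix.diagonal (fun i => (‖d i‖ : ℂ)) * star U) := by
    rw [hstar]
    refine Matrix.PosSemidef.mul_mul_conjTranspose_same ?_ U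
    refine Matrix.posSemidef_diagonal_iff.mpr fun i => ?_
    rw [Complex.zero_le_real]
    exact norm_nonneg _
  have hsq : (U * Matrix.diagonal (fun i => (‖d i‖ : ℂ)) * star U) ^ 2
      = A * Aᴴ := by
    rw [pow_two, UDU_mul U hU, hA, UDU_conjTranspose, UDU_mul U hU]
    have hfun : (fun i => (‖d i‖ : ℂ)) * (fun i => (‖d i‖ : ℂ))
        = d * star d := by
      funext i
      show (‖d i‖ : ℂ) * (‖d i‖ : ℂ) = d i * (starRingEnd ℂ) (d i)
      rw [← Complex.ofReal_mul, Complex.norm_def,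
        Real.mul_self_sqrt (Complex.normSq_nonneg _)]
      exact (Complex.mul_conj (d i)).symm
    rw [hfun]
  have hP := Matrix.posSemidef_self_mul_conjTranspose A
  have e1 : matAbs A = cfc Real.sqrt (A * Aᴴ) := by
    rw [hP.1.cfc_eq, Matrix.IsHermitian.cfc, Unitary.conjStarAlgAut_apply]; rfl
  rw [e1, ← cfcₙ_eq_cfc, ← CFC.sqrt_eq_real_sqrt (A * Aᴴ) hP.nonneg]
  exact CFC.sqrt_unique (by rw [← pow_two]; exact hsq) hS.nonneg

lemma keyScalar (x E s : ℝ) (hs : 0 < s) :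
    (2 * Complex.I)⁻¹ * (((x : ℂ) - ((E : ℂ) + (s : ℂ) * Complex.I))⁻¹
        - (starRingEnd ℂ) (((x : ℂ) - ((E : ℂ) + (s : ℂ) * Complex.I))⁻¹)) / (s : ℂ)
      = ((((x - E) ^ 2 + s ^ 2)⁻¹ : ℝ) : ℂ) := by
  set z : ℂ := (x : ℂ) - ((E : ℂ) + (s : ℂ) * Complex.I) with hzdef
  have hz : z ≠ 0 := by
    intro h
    have h2 := congrArg Complex.im h
    simp [hzdef] at h2
    exact hs.ne' h2
  have hzc : (starRingEnd ℂ) z ≠ 0 := by simpa using hz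
  have h1 : z * (starRingEnd ℂ) z = ((((x - E) ^ 2 + s ^ 2 : ℝ)) : ℂ) := by
    rw [Complex.mul_conj]
    norm_cast
    simp [hzdef, Complex.normSq_apply]
    ring
  have h2 : (starRingEnd ℂ) z - z = 2 * (s : ℂ) * Complex.I := by
    simp [hzdef, map_sub, map_add, _root_.map_mul, Complex.conj_ofReal, Complex.conj_I]
    ring
  rw [map_inv₀, inv_sub_inv hz hzc, h2, h1]
  have hn : ((((x - E) ^ 2 + s ^ 2 : ℝ)) : ℂ) ≠ 0 := by
    rw [Complex.ofReal_ne_zero]; positivity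
  have hsC : (s : ℂ) ≠ 0 := by rw [Complex.ofReal_ne_zero]; exact hs.ne'
  rw [Complex.ofReal_inv, inv_mul_eq_div, div_div, div_div, inv_eq_one_div,
    div_eq_div_iff (by exact mul_ne_zero hn (mul_ne_zero (mul_ne_zero two_ne_zero Complex.I_ne_zero) hsC)) hn]
  ring

/-- integral representation of `|G(E+iη)|` (stated entrywise). -/
theorem absG_integral_rep {N : ℕ} (W : Matrix (Fin N) (Fin N) ℂ) (hW : W.IsHermitian)
    (E η : ℝ) (hη : 0 < η) (a b : Fin N) :
    matAbs (resOf W (E + η * Complex.I)) a b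
      = ((2 / Real.pi : ℝ) : ℂ) * ∫ v in Set.Ioi (0:ℝ),
          imPart (resOf W (E + (Real.sqrt (η ^ 2 + v ^ 2) : ℝ) * Complex.I)) a b /
            ((Real.sqrt (η ^ 2 + v ^ 2) : ℝ) : ℂ) := by
  classical
  set U : Matrix (Fin N) (Fin N) ℂ := (hW.eigenvectorUnitary : Matrix (Fin N) (Fin N) ℂ) with hUdef
  have hU : U ∈ Matrix.unitaryGroup (Fin N) ℂ := hW.eigenvectorUnitary.2
  set lam := hW.eigenvalues with hlamdef
  set c : Fin N → ℝ := fun i => Real.sqrt ((lam i - E) ^ 2 + η ^ 2) with hcdef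
  have hc : ∀ i, 0 < c i := fun i => Real.sqrt_pos.mpr (by positivity)
  have hc2 : ∀ i, c i ^ 2 = (lam i - E) ^ 2 + η ^ 2 := fun i => Real.sq_sqrt (by positivity)
  have hnz : ∀ (x s : ℝ), s ≠ 0 → ((x : ℂ) - ((E : ℂ) + (s : ℂ) * Complex.I)) ≠ 0 := by
    intro x s hs h
    have h2 := congrArg Complex.im h
    simp at h2
    exact hs h2
  have habs : ∀ (x s : ℝ), ‖((x : ℂ) - ((E : ℂ) + (s : ℂ) * Complex.I))‖
      = Real.sqrt ((x - E) ^ 2 + s ^ 2) := by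
    intro x s
    rw [Complex.norm_def]
    congr 1
    simp [Complex.normSq_apply]
    ring
  -- LHS
  have hres0 := res_diag hW ((E : ℂ) + (η : ℂ) * Complex.I) (fun i => hnz _ _ hη.ne')
  have hLHS : matAbs (resOf W ((E : ℂ) + (η : ℂ) * Complex.I)) a b
      = ∑ i, U a i * (starRingEnd ℂ) (U b i) * (((c i)⁻¹ : ℝ) : ℂ) := by
    rw [matAbs_diag' U hU _ _ hres0, conjU_apply]
    apply Finset.sum_congr rfl
    intro i _
    rw [norm_inv, habs (lam i) η]
    simp only [hcdef]
    push_cast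
    ring
  -- RHS integrand
  have hRHS : ∀ v : ℝ,
      imPart (resOf W ((E : ℂ) + ((Real.sqrt (η ^ 2 + v ^ 2) : ℝ) : ℂ) * Complex.I)) a b
          / ((Real.sqrt (η ^ 2 + v ^ 2) : ℝ) : ℂ)
        = ∑ i, U a i * (starRingEnd ℂ) (U b i) * (((c i ^ 2 + v ^ 2)⁻¹ : ℝ) : ℂ) := by
    intro v
    set s : ℝ := Real.sqrt (η ^ 2 + v ^ 2) with hsdef
    have hs : 0 < s := Real.sqrt_pos.mpr (by positivity)
    have hs2 : s ^ 2 = η ^ 2 + v ^ 2 := Real.sq_sqrt (by positivity)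
    have hres := res_diag hW ((E : ℂ) + (s : ℂ) * Complex.I) (fun i => hnz _ _ hs.ne')
    rw [imPart, hres, UDU_conjTranspose]
    set dfun : Fin N → ℂ := fun i => ((lam i : ℂ) - ((E : ℂ) + (s : ℂ) * Complex.I))⁻¹ with hdfun
    have hdiagsub : Matrix.diagonal (dfun - star dfun)
        = Matrix.diagonal dfun - Matrix.diagonal (star dfun) := by
      ext j k
      by_cases h : j = k
      · subst h; simp
      · simp [Matrix.diagonal_apply_ne _ h, h]
    have hsub : U * Matrix.diagonal dfun * star U
        - U * Matrix.diagonal (star dfun) * star U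
        = U * Matrix.diagonal (dfun - star dfun) * star U := by
      rw [hdiagsub, Matrix.mul_sub, Matrix.sub_mul]
    rw [hsub, Matrix.smul_apply, conjU_apply, smul_eq_mul, Finset.mul_sum, Finset.sum_div]
    apply Finset.sum_congr rfl
    intro i _
    have hkey := keyScalar (lam i) E s hs
    have hcv : c i ^ 2 + v ^ 2 = (lam i - E) ^ 2 + s ^ 2 := by
      rw [hc2 i, hs2]; ring
    rw [hcv]
    rw [← hkey]
    simp only [Pi.sub_apply, Pi.star_apply, Complex.star_def]
    ring
  -- put together
  rw [hLHS]
  have h1 : (∫ v in Set.Ioi (0:ℝ),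
        imPart (resOf W ((E : ℂ) + ((Real.sqrt (η ^ 2 + v ^ 2) : ℝ) : ℂ) * Complex.I)) a b
          / ((Real.sqrt (η ^ 2 + v ^ 2) : ℝ) : ℂ))
      = ∑ i, U a i * (starRingEnd ℂ) (U b i) * ((Real.pi / (2 * c i) : ℝ) : ℂ) := by
    rw [integral_congr_ae (Filter.Eventually.of_forall fun v => hRHS v)]
    rw [integral_finset_sum]
    · apply Finset.sum_congr rfl
      intro i _
      rw [integral_const_mul]
      congr 1
      rw [← myIntegral (c i) (hc i)]
      exact integral_ofReal
    · intro i _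
      exact (myIntegrable (c i) (hc i)).ofReal.const_mul (U a i * (starRingEnd ℂ) (U b i))
  rw [h1, Finset.mul_sum]
  apply Finset.sum_congr rfl
  intro i _
  have hpi : (Real.pi : ℂ) ≠ 0 := by
    rw [Complex.ofReal_ne_zero]; exact Real.pi_ne_zero
  have hci : ((c i : ℝ) : ℂ) ≠ 0 := by
    rw [Complex.ofReal_ne_zero]; exact (hc i).ne'
  push_cast
  field_simp
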